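/- arXiv:1702.05610 — 2 statements merged into one kernel-verified Lean document; each statement's English description precedes it below -/
import Mathlib

section
/- Let (X_p)_p, indexed by the primes, be independent random variables on a probability space (Ω, P), each distributed according to the probability Haar measure on SU₂(ℂ). Then for every real σ with σ > 1/2, the series Σ_p Tr(X_p) p^{−σ} over the primes converges almost surely (its partial sums over primes p ≤ P converge as P → ∞). -/
open MeasureTheory ProbabilityTheory Filter

noncomputable section

/-- `SU₂(ℂ)`: the group of 2×2 complex unitary matrices of determinant 1. -/
abbrev SU2 := Matrix.specialUnitaryGroup (Fin 2) ℂ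

noncomputable instance : MeasurableSpace SU2 := borel SU2

instance : BorelSpace SU2 := ⟨rfl⟩

instance : Group SU2 :=
  { (inferInstance : Monoid SU2) with
    inv := fun A => ⟨star (A : Matrix (Fin 2) (Fin 2) ℂ), by
      obtain ⟨h1, h2⟩ := Matrix.mem_specialUnitaryGroup_iff.mp A.2
      refine Matrix.mem_specialUnitaryGroup_iff.mpr ⟨Unitary.star_mem h1, ?_⟩
      show Matrix.det (star (A : Matrix (Fin 2) (Fin 2) ℂ)) = 1
      rw [Matrix.star_eq_conjTranspose, Matrix.det_conjTranspose, h2, star_one]⟩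
    inv_mul_cancel := fun A => Subtype.ext (Unitary.star_mul_self_of_mem A.2.1) }

/-- The (real) trace of an element of `SU₂(ℂ)`; the trace of a unitary matrix with
determinant 1 is real, and we take its real part. -/
def rtr (x : SU2) : ℝ := (Matrix.trace (x : Matrix (Fin 2) (Fin 2) ℂ)).re

/-- The polynomial `U_ν` determined by `U_ν(2 cos θ) = sin((ν+1)θ)/sin θ`
(a rescaled Chebyshev polynomial of the second kind). -/
def chebU (ν : ℕ) (x : ℝ) : ℝ := (Polynomial.Chebyshev.U ℝ (ν : ℤ)).eval (x / 2)

/-- `Yn x n = ∏_{p^ν ∥ n} U_ν(Tr x_p)`, the product being over the prime powers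
exactly dividing `n`. -/
def Yn (x : ℕ → SU2) (n : ℕ) : ℝ :=
  ∏ p ∈ n.primeFactors, chebU (n.factorization p) (rtr (x p))


open scoped ENNReal NNReal

section Aux

lemma rtr_continuous : Continuous rtr :=
  Complex.continuous_re.comp ((continuous_subtype_val (p := (· ∈ Matrix.specialUnitaryGroup (Fin 2) ℂ))).matrix_trace)

lemma rtr_bound (x : SU2) : |rtr x| ≤ 2 := by
  obtain ⟨A, hA⟩ := x
  have hu : star A * A = 1 := Unitary.star_mul_self_of_mem hA.1
  have h0 : ∀ i : Fin 2, Complex.normSq (A 0 i) + Complex.normSq (A 1 i) = 1 := by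
    intro i
    have := congrFun (congrFun hu i) i
    rw [Matrix.mul_apply, Fin.sum_univ_two, Matrix.one_apply_eq] at this
    have h00 : (star A) i 0 = starRingEnd ℂ (A 0 i) := rfl
    have h01 : (star A) i 1 = starRingEnd ℂ (A 1 i) := rfl
    rw [h00, h01] at this
    have := congrArg Complex.re this
    simpa [Complex.normSq_eq_conj_mul_self, Complex.normSq_apply] using this
  have hb0 : ‖A 0 0‖ ≤ 1 := by
    have h1 := h0 0
    have := Complex.sq_norm (A 0 0)
    nlinarith [norm_nonneg (A 0 0), Complex.normSq_nonneg (A 1 0)]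
  have hb1 : ‖A 1 1‖ ≤ 1 := by
    have h1 := h0 1
    have := Complex.sq_norm (A 1 1)
    nlinarith [norm_nonneg (A 1 1), Complex.normSq_nonneg (A 0 1)]
  have ht : rtr ⟨A, hA⟩ = (A 0 0).re + (A 1 1).re := by
    simp [rtr, Matrix.trace_fin_two]
  rw [ht]
  have r0 := abs_le.mp (le_trans (Complex.abs_re_le_norm (A 0 0)) hb0)
  have r1 := abs_le.mp (le_trans (Complex.abs_re_le_norm (A 1 1)) hb1)
  rw [abs_le]; constructor <;> linarith [r0.1, r0.2, r1.1, r1.2]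

lemma integral_rtr (μ : Measure SU2) (hHaar : μ.IsHaarMeasure) : ∫ x, rtr x ∂μ = 0 := by
  have : μ.IsMulLeftInvariant := hHaar.toIsMulLeftInvariant
  have hg : (-1 : Matrix (Fin 2) (Fin 2) ℂ) ∈ Matrix.specialUnitaryGroup (Fin 2) ℂ := by
    refine Matrix.mem_specialUnitaryGroup_iff.mpr ⟨?_, ?_⟩
    · constructor <;> simp [Matrix.mem_unitaryGroup_iff]
    · simp [Matrix.det_neg]
  set g : SU2 := ⟨-1, hg⟩
  have key : ∫ x, rtr (g * x) ∂μ = ∫ x, rtr x ∂μ := integral_mul_left_eq_self rtr g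
  have hneg : ∀ x : SU2, rtr (g * x) = - rtr x := by
    intro x
    have : ((g * x : SU2) : Matrix (Fin 2) (Fin 2) ℂ) = -(x : Matrix (Fin 2) (Fin 2) ℂ) := by
      show (-1 : Matrix (Fin 2) (Fin 2) ℂ) * x = _
      simp
    simp [rtr, this]
  rw [show (fun x => rtr (g * x)) = fun x => - rtr x from funext hneg, integral_neg] at key
  linarith

lemma indep_mono {Ω : Type*} {mΩ : MeasurableSpace Ω} {μ : Measure Ω}
    {m₁ m₂ m₁' m₂' : MeasurableSpace Ω} (h : Indep m₁' m₂' μ) (h1 : m₁ ≤ m₁') (h2 : m₂ ≤ m₂') :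
    Indep m₁ m₂ μ :=
  fun t1 t2 ht1 ht2 => h t1 t2 (h1 _ ht1) (h2 _ ht2)

lemma comap_const_le {Ω : Type*} {m : MeasurableSpace Ω} (c : ℝ) :
    MeasurableSpace.comap (fun _ : Ω => c) (inferInstance : MeasurableSpace ℝ) ≤ m := by
  rintro s ⟨t, _, rfl⟩
  classical
  by_cases hc : c ∈ t
  · simp only [Set.preimage_const_of_mem hc]; exact MeasurableSet.univ
  · simp only [Set.preimage_const_of_notMem hc]; exact MeasurableSet.empty

end Aux

/-- If the `X_p` are independent and Haar-distributed on `SU₂(ℂ)`, then for `σ > 1/2`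
the series `Σ_p Tr(X_p) p^{-σ}` over primes converges almost surely. -/
theorem statement4
    {Ω : Type*} [MeasurableSpace Ω] (P : Measure Ω) [IsProbabilityMeasure P]
    (X : ℕ → Ω → SU2) (hXm : ∀ p, Measurable (X p))
    (hindep : iIndepFun (fun p : Nat.Primes => X p) P)
    (μ : Measure SU2) (hHaar : μ.IsHaarMeasure) (hμprob : IsProbabilityMeasure μ)
    (hdist : ∀ p : ℕ, p.Prime → Measure.map (X p) P = μ)
    (σ : ℝ) (hσ : 1 / 2 < σ) :
    ∀ᵐ ω ∂P, ∃ l : ℝ,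
      Tendsto (fun N : ℕ =>
          ∑ p ∈ (Finset.range (N + 1)).filter Nat.Prime, rtr (X p ω) * (p : ℝ) ^ (-σ))
        atTop (nhds l) := by
  classical
  have hrtrm : Measurable rtr := rtr_continuous.measurable
  -- the summands
  set Y : ℕ → Ω → ℝ := fun n => if n.Prime then (fun ω => rtr (X n ω) * (n : ℝ) ^ (-σ)) else 0
    with hYdef
  have hYm : ∀ n, Measurable (Y n) := by
    intro n
    by_cases hn : n.Prime
    · simp only [hYdef, if_pos hn]
      exact (hrtrm.comp (hXm n)).mul_const _
    · simp only [hYdef, if_neg hn]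
      exact measurable_const
  have hYsm : ∀ n, StronglyMeasurable (Y n) := fun n => (hYm n).stronglyMeasurable
  have hpow_le_one : ∀ n : ℕ, n.Prime → ((n : ℝ)) ^ (-σ) ≤ 1 := by
    intro n hn
    apply Real.rpow_le_one_of_one_le_of_nonpos
    · exact_mod_cast hn.one_lt.le
    · linarith
  have hpow_nonneg : ∀ n : ℕ, (0:ℝ) ≤ (n : ℝ) ^ (-σ) := fun n => Real.rpow_nonneg (by positivity) _
  have hYb : ∀ n ω, ‖Y n ω‖ ≤ 2 := by
    intro n ω
    by_cases hn : n.Prime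
    · simp only [hYdef, if_pos hn, Real.norm_eq_abs, abs_mul,
        abs_of_nonneg (hpow_nonneg n)]
      calc |rtr (X n ω)| * (n:ℝ) ^ (-σ) ≤ 2 * 1 :=
            mul_le_mul (rtr_bound _) (hpow_le_one n hn) (hpow_nonneg n) (by norm_num)
        _ = 2 := by norm_num
    · simp [hYdef, if_neg hn]
  have hY2 : ∀ n, MemLp (Y n) 2 P :=
    fun n => (memLp_top_of_bound (hYsm n).aestronglyMeasurable 2
      (Filter.Eventually.of_forall (hYb n))).mono_exponent le_top
  have hYint : ∀ n, Integrable (Y n) P := fun n => (hY2 n).integrable (by norm_num)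
  -- mean zero
  have hYmean : ∀ n, ∫ ω, Y n ω ∂P = 0 := by
    intro n
    by_cases hn : n.Prime
    · simp only [hYdef, if_pos hn]
      rw [integral_mul_const]
      have : ∫ ω, rtr (X n ω) ∂P = ∫ x, rtr x ∂(Measure.map (X n) P) := by
        rw [integral_map (hXm n).aemeasurable]
        exact rtr_continuous.aestronglyMeasurable
      rw [this, hdist n hn, integral_rtr μ hHaar, zero_mul]
    · simp [hYdef, if_neg hn]
  -- variance bound
  have h2σ : (1:ℝ) < 2 * σ := by linarith
  have hsummable : Summable (fun n : ℕ => 4 * (((n:ℝ) ^ (2*σ))⁻¹)) :=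
    (Real.summable_nat_rpow_inv.mpr h2σ).mul_left 4
  have hbdd_nonneg : ∀ n : ℕ, (0:ℝ) ≤ 4 * (((n:ℝ) ^ (2*σ))⁻¹) := by
    intro n; positivity
  have hYvar : ∀ n, n.Prime → variance (Y n) P ≤ 4 * (((n:ℝ) ^ (2*σ))⁻¹) := by
    intro n hn
    refine le_trans (variance_le_expectation_sq (hYsm n).aestronglyMeasurable) ?_
    have hsq : ∀ ω, (Y n ω) ^ 2 ≤ 4 * (((n:ℝ) ^ (2*σ))⁻¹) := by
      intro ω
      have hb := rtr_bound (X n ω)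
      have hnn : (0:ℝ) ≤ (n:ℝ) := by positivity
      have hpow2 : ((n:ℝ) ^ (-σ)) ^ 2 = ((n:ℝ) ^ (2*σ))⁻¹ := by
        rw [← Real.rpow_natCast ((n:ℝ) ^ (-σ)) 2, ← Real.rpow_mul hnn, ← Real.rpow_neg hnn]
        norm_num
        ring_nf
      simp only [hYdef, if_pos hn]
      rw [mul_pow, hpow2]
      have h4 : (rtr (X n ω))^2 ≤ 4 := by nlinarith [abs_nonneg (rtr (X n ω)), sq_abs (rtr (X n ω))]
      have hinv : (0:ℝ) ≤ ((n:ℝ) ^ (2*σ))⁻¹ := by positivity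
      nlinarith [sq_nonneg (rtr (X n ω))]
    calc ∫ ω, (Y n ^ 2) ω ∂P ≤ ∫ _, 4 * (((n:ℝ) ^ (2*σ))⁻¹) ∂P := by
          refine integral_mono ((hY2 n).integrable_sq) (integrable_const _) ?_
          intro ω; exact hsq ω
      _ = 4 * (((n:ℝ) ^ (2*σ))⁻¹) := by simp
  -- the partial-sum process
  set S : ℕ → Ω → ℝ := fun N => ∑ n ∈ Finset.range (N + 1), Y n with hSdef
  have hSapp : ∀ N, S N = fun ω => ∑ n ∈ Finset.range (N + 1), Y n ω :=
    fun N => funext fun ω => Finset.sum_apply ..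
  have hSfilter : ∀ N, ∑ n ∈ (Finset.range (N+1)).filter Nat.Prime, Y n = S N := by
    intro N
    refine Finset.sum_filter_of_ne ?_
    intro x _ hx
    by_contra h
    exact hx (by simp [hYdef, if_neg h])
  have hS2 : ∀ N, MemLp (S N) 2 P := fun N => memLp_finset_sum' _ (fun i _ => hY2 i)
  have hSint : ∀ N, Integrable (S N) P := by
    intro N
    rw [hSapp N]
    exact integrable_finset_sum _ (fun i _ => hYint i)
  have hSmean : ∀ N, ∫ ω, S N ω ∂P = 0 := by
    intro N
    have : ∫ ω, S N ω ∂P = ∑ n ∈ Finset.range (N+1), ∫ ω, Y n ω ∂P := by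
      rw [hSapp N]
      exact integral_finset_sum _ (fun i _ => hYint i)
    rw [this]
    exact Finset.sum_eq_zero fun n _ => hYmean n
  -- variance of the partial sums
  set T : ℝ := ∑' n : ℕ, 4 * (((n:ℝ) ^ (2*σ))⁻¹) with hTdef
  have hSvar : ∀ N, variance (S N) P ≤ T := by
    intro N
    rw [← hSfilter N]
    rw [IndepFun.variance_sum (fun i _ => hY2 i) ?_]
    · refine le_trans (Finset.sum_le_sum (fun i hi => hYvar i (Finset.mem_filter.mp hi).2)) ?_
      exact Summable.sum_le_tsum _ (fun i _ => hbdd_nonneg i) hsummable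
    · intro i hi j hj hij
      simp only [Finset.coe_filter, Set.mem_setOf_eq, Finset.mem_range] at hi hj
      have hpi := hi.2
      have hpj := hj.2
      have h1 : IndepFun (X i) (X j) P :=
        hindep.indepFun (by
          intro h
          exact hij (congrArg (fun q : Nat.Primes => (q : ℕ)) h) :
            (⟨i, hpi⟩ : Nat.Primes) ≠ ⟨j, hpj⟩)
      have h2 := h1.comp (φ := fun x => rtr x * (i:ℝ) ^ (-σ)) (ψ := fun x => rtr x * (j:ℝ) ^ (-σ))
        (hrtrm.mul_const _) (hrtrm.mul_const _)
      have hYi : Y i = (fun x => rtr x * (i:ℝ) ^ (-σ)) ∘ X i := by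
        funext ω; simp [hYdef, if_pos hpi, Function.comp]
      have hYj : Y j = (fun x => rtr x * (j:ℝ) ^ (-σ)) ∘ X j := by
        funext ω; simp [hYdef, if_pos hpj, Function.comp]
      rw [hYi, hYj]
      exact h2
  -- second moment bound, hence L¹ bound
  have hSsq : ∀ N, ∫ ω, (S N ω) ^ 2 ∂P ≤ T := by
    intro N
    have := variance_eq_sub (hS2 N)
    have hv : variance (S N) P = ∫ ω, (S N ω)^2 ∂P - (∫ ω, S N ω ∂P)^2 := this
    rw [hSmean N] at hv
    have := hSvar N
    nlinarith [this, hv]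
  have hL1 : ∀ N, ∫ ω, ‖S N ω‖ ∂P ≤ (T + 1) / 2 := by
    intro N
    have hptw : ∀ ω, ‖S N ω‖ ≤ ((S N ω)^2 + 1) / 2 := by
      intro ω
      rw [Real.norm_eq_abs]
      nlinarith [sq_nonneg (|S N ω| - 1), sq_abs (S N ω), abs_nonneg (S N ω)]
    calc ∫ ω, ‖S N ω‖ ∂P ≤ ∫ ω, ((S N ω)^2 + 1) / 2 ∂P := by
          refine integral_mono (hSint N).norm ?_ hptw
          exact (((hS2 N).integrable_sq).add (integrable_const 1)).div_const 2
      _ = ((∫ ω, (S N ω)^2 ∂P) + 1) / 2 := by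
          rw [integral_div, integral_add ((hS2 N).integrable_sq) (integrable_const 1)]
          simp
      _ ≤ (T + 1) / 2 := by linarith [hSsq N]
  -- the filtration and the martingale property
  set ℱ := Filtration.natural Y hYsm with hF
  have hadp : StronglyAdapted ℱ S := by
    intro N
    rw [hSapp N]
    refine Finset.stronglyMeasurable_fun_sum _ fun n hn => ?_
    exact ((Filtration.stronglyAdapted_natural hYsm) n).mono (ℱ.mono (Finset.mem_range_succ_iff.mp hn))
  have hcond : ∀ N, S N =ᵐ[P] P[S (N+1)|ℱ N] := by
    intro N
    have hsucc : S (N+1) = S N + Y (N+1) := by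
      rw [hSdef]; exact Finset.sum_range_succ Y (N+1)
    have h3 : P[Y (N+1)|ℱ N] =ᵐ[P] fun _ => (0:ℝ) := by
      by_cases hp : (N+1).Prime
      · have hYeq : Y (N+1) = (fun x => rtr x * ((N+1:ℕ):ℝ) ^ (-σ)) ∘ X (N+1) := by
          funext ω; simp [hYdef, if_pos hp, Function.comp]
        have ha : MeasurableSpace.comap (Y (N+1)) inferInstance
            ≤ MeasurableSpace.comap (X (N+1)) inferInstance := by
          rw [hYeq, ← MeasurableSpace.comap_comp]
          exact MeasurableSpace.comap_mono (hrtrm.mul_const _).comap_le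
        have hb : ℱ N ≤ ⨆ q ∈ {q : Nat.Primes | (q:ℕ) ≤ N}, MeasurableSpace.comap (X q) inferInstance := by
          refine iSup₂_le fun j hj => ?_
          by_cases hpj : j.Prime
          · have hle : MeasurableSpace.comap (Y j) inferInstance
                ≤ MeasurableSpace.comap (X j) inferInstance := by
              have hYeqj : Y j = (fun x => rtr x * (j:ℝ) ^ (-σ)) ∘ X j := by
                funext ω; simp [hYdef, if_pos hpj, Function.comp]
              rw [hYeqj, ← MeasurableSpace.comap_comp]
              exact MeasurableSpace.comap_mono (hrtrm.mul_const _).comap_le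
            refine le_trans hle ?_
            exact le_biSup (f := fun q : Nat.Primes => MeasurableSpace.comap (X (q:ℕ)) inferInstance)
              (show (⟨j, hpj⟩ : Nat.Primes) ∈ {q : Nat.Primes | (q:ℕ) ≤ N} from hj)
          · have : Y j = fun _ => (0:ℝ) := by funext ω; simp [hYdef, if_neg hpj]
            rw [this]
            exact comap_const_le 0
        have hdisj : Disjoint ({⟨N+1, hp⟩} : Set Nat.Primes) {q : Nat.Primes | (q:ℕ) ≤ N} := by
          refine Set.disjoint_singleton_left.mpr ?_
          show ¬ ((N+1 : ℕ) ≤ N)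
          omega
        have hbig := indep_iSup_of_disjoint
          (m := fun q : Nat.Primes => MeasurableSpace.comap (X (q:ℕ)) inferInstance)
          (fun q => (hXm (q:ℕ)).comap_le) hindep hdisj
        rw [(iSup_singleton : (⨆ i ∈ ({⟨N+1, hp⟩} : Set Nat.Primes), MeasurableSpace.comap (X (i:ℕ)) inferInstance) = _)] at hbig
        have hIndep : Indep (MeasurableSpace.comap (Y (N+1)) inferInstance) (ℱ N) P :=
          indep_mono hbig ha hb
        refine (condExp_indep_eq (hYm (N+1)).comap_le (ℱ.le N)
          (Measurable.stronglyMeasurable (comap_measurable (Y (N+1)))) hIndep).trans ?_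
        rw [show (∫ ω, Y (N+1) ω ∂P) = 0 from hYmean (N+1)]
      · have : Y (N+1) = (0 : Ω → ℝ) := by funext ω; simp [hYdef, if_neg hp]
        rw [this, condExp_zero]
        rfl
    have h1 : P[S (N+1)|ℱ N] =ᵐ[P] P[S N|ℱ N] + P[Y (N+1)|ℱ N] := by
      rw [hsucc]
      exact condExp_add (hSint N) (hYint (N+1)) _
    have h2 : P[S N|ℱ N] = S N :=
      condExp_of_stronglyMeasurable (ℱ.le N) (hadp N) (hSint N)
    refine EventuallyEq.symm (h1.trans ?_)
    rw [h2]
    filter_upwards [h3] with ω hω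
    simp [hω]
  have hmart : Martingale S ℱ P := martingale_nat hadp hSint hcond
  -- L¹ boundedness in eLpNorm form
  set R : NNReal := ((T + 1) / 2).toNNReal with hR
  have hbound : ∀ N, eLpNorm (S N) 1 P ≤ (R : ℝ≥0∞) := by
    intro N
    rw [eLpNorm_one_eq_lintegral_enorm, ← ofReal_integral_norm_eq_lintegral_enorm (hSint N)]
    exact ENNReal.ofReal_le_ofReal (hL1 N)
  have hfinal := hmart.submartingale.exists_ae_tendsto_of_bdd hbound
  filter_upwards [hfinal] with ω hω
  obtain ⟨c, hc⟩ := hω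
  refine ⟨c, ?_⟩
  have heq : ∀ N : ℕ, (∑ p ∈ (Finset.range (N + 1)).filter Nat.Prime,
      rtr (X p ω) * (p : ℝ) ^ (-σ)) = S N ω := by
    intro N
    rw [← hSfilter N, Finset.sum_apply]
    refine Finset.sum_congr rfl fun p hp => ?_
    have hpp := (Finset.mem_filter.mp hp).2
    simp [hYdef, if_pos hpp]
  rw [show (fun N : ℕ => ∑ p ∈ (Finset.range (N + 1)).filter Nat.Prime,
      rtr (X p ω) * (p : ℝ) ^ (-σ)) = fun N => S N ω from funext heq]
  exact hc
end
end

section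
/- Let (a_n)_{n≥1} be complex numbers and let σ₀ ∈ ℝ. Suppose the partial sums S(u) = Σ_{n≤u} a_n n^{−σ₀} converge to a limit as u → ∞ (in particular u ↦ S(u) is bounded). Then for every s ∈ ℂ with Re(s) > σ₀, the Dirichlet series Σ_{n≥1} a_n n^{−s} converges and one has Σ_{n≥1} a_n n^{−s} = (s − σ₀) ∫_1^∞ S(u) u^{−(s−σ₀+1)} du, the integral being absolutely convergent. -/
open MeasureTheory ProbabilityTheory Filter

noncomputable section

/-- Summation by parts for Dirichlet series: if the partial sums
`S(u) = Σ_{n ≤ u} a_n n^{-σ₀}` converge as `u → ∞`, then for `Re(s) > σ₀` the Dirichlet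
series `Σ_n a_n n^{-s}` converges and equals `(s - σ₀) ∫_1^∞ S(u) u^{-(s-σ₀+1)} du`,
the integral being absolutely convergent. -/
theorem statement11 (a : ℕ → ℂ) (σ₀ : ℝ)
    (hconv : ∃ l : ℂ,
      Tendsto (fun u : ℝ => ∑ n ∈ Finset.Icc 1 ⌊u⌋₊, a n * (n : ℂ) ^ (-(σ₀ : ℂ)))
        atTop (nhds l))
    (s : ℂ) (hs : σ₀ < s.re) :
    IntegrableOn
      (fun u : ℝ =>
        (∑ n ∈ Finset.Icc 1 ⌊u⌋₊, a n * (n : ℂ) ^ (-(σ₀ : ℂ))) * (u : ℂ) ^ (-(s - σ₀ + 1)))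
      (Set.Ici (1 : ℝ)) ∧
    Tendsto (fun N : ℕ => ∑ n ∈ Finset.Icc 1 N, a n * (n : ℂ) ^ (-s)) atTop
      (nhds ((s - σ₀) * ∫ u in Set.Ici (1 : ℝ),
        (∑ n ∈ Finset.Icc 1 ⌊u⌋₊, a n * (n : ℂ) ^ (-(σ₀ : ℂ))) * (u : ℂ) ^ (-(s - σ₀ + 1)))) := by
  obtain ⟨l, hl⟩ := hconv
  set S : ℝ → ℂ := fun u : ℝ => ∑ n ∈ Finset.Icc 1 ⌊u⌋₊, a n * (n : ℂ) ^ (-(σ₀ : ℂ)) with hSdef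
  set c : ℕ → ℂ := fun n => if n = 0 then 0 else a n * (n : ℂ) ^ (-(σ₀ : ℂ)) with hcdef
  have hc0 : c 0 = 0 := rfl
  set f : ℝ → ℂ := fun t : ℝ => (t : ℂ) ^ (-(s - σ₀)) with hfdef
  -- the partial sums of `c` over `Icc 0 m` agree with `S`
  have hsum : ∀ m : ℕ, ∑ k ∈ Finset.Icc 0 m, c k = S m := by
    intro m
    rw [Finset.Icc_eq_cons_Ioc (Nat.zero_le m), Finset.sum_cons, hc0, zero_add]
    rw [hSdef]
    simp only [Nat.floor_natCast]
    rw [show Finset.Icc 1 m = Finset.Ioc 0 m from (Finset.Icc_add_one_left_eq_Ioc 0 m)]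
    refine Finset.sum_congr rfl fun k hk => ?_
    have : k ≠ 0 := (Finset.mem_Ioc.mp hk).1.ne'
    simp [hcdef, this]
  have hSfloor : ∀ u : ℝ, S u = S (⌊u⌋₊ : ℝ) := by
    intro u; rw [hSdef]; simp [Nat.floor_natCast]
  -- boundedness of S
  have hT : Tendsto (fun m : ℕ => S (m : ℝ)) atTop (nhds l) :=
    hl.comp tendsto_natCast_atTop_atTop
  obtain ⟨C, hC⟩ := hT.norm.bddAbove_range
  have hCb : ∀ u : ℝ, ‖S u‖ ≤ C := by
    intro u
    rw [hSfloor u]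
    exact hC ⟨⌊u⌋₊, rfl⟩
  have hC0 : 0 ≤ C := le_trans (norm_nonneg _) (hCb 0)
  -- real part facts
  have hre : (-(s - σ₀ + 1)).re = -(s.re - σ₀ + 1) := by simp
  have hrelt : -(s.re - σ₀ + 1) < -1 := by linarith
  -- measurability of S
  have hSm : Measurable S := by
    have : S = (fun m : ℕ => ∑ n ∈ Finset.Icc 1 m, a n * (n : ℂ) ^ (-(σ₀ : ℂ))) ∘ Nat.floor := rfl
    rw [this]
    exact measurable_from_top.comp Nat.measurable_floor
  -- integrability of the integrand on [1, ∞)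
  have hInt : IntegrableOn (fun u : ℝ => S u * (u : ℂ) ^ (-(s - σ₀ + 1))) (Set.Ici (1 : ℝ)) := by
    have hmeas : AEStronglyMeasurable (fun u : ℝ => S u * (u : ℂ) ^ (-(s - σ₀ + 1)))
        (volume.restrict (Set.Ici (1:ℝ))) := by
      have hcont : ContinuousOn (fun u : ℝ => (u : ℂ) ^ (-(s - σ₀ + 1))) (Set.Ici (1:ℝ)) :=
        fun t ht => (Complex.continuousAt_ofReal_cpow_const t _
          (Or.inr (ne_of_gt (lt_of_lt_of_le one_pos ht)))).continuousWithinAt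
      exact hSm.aestronglyMeasurable.mul (hcont.aestronglyMeasurable measurableSet_Ici)
    have hg0 : IntegrableOn (fun u : ℝ => C * u ^ (-(s.re - σ₀ + 1))) (Set.Ici (1 : ℝ)) := by
      rw [integrableOn_Ici_iff_integrableOn_Ioi]
      exact (integrableOn_Ioi_rpow_of_lt hrelt one_pos).const_mul C
    refine hg0.mono' hmeas ?_
    refine (ae_restrict_iff' measurableSet_Ici).mpr (ae_of_all _ fun u hu => ?_)
    have hu0 : (0 : ℝ) < u := lt_of_lt_of_le one_pos hu
    rw [norm_mul,
      Complex.norm_cpow_eq_rpow_re_of_pos hu0, hre]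
    exact mul_le_mul (hCb u) le_rfl (Real.rpow_nonneg hu0.le _) hC0
  refine ⟨hInt, ?_⟩
  -- derivative of f
  have hder : ∀ t : ℝ, 0 < t →
      HasDerivAt f (-(s - σ₀) * (t : ℂ) ^ (-(s - σ₀ + 1))) t := by
    intro t ht
    have h0 : ((t : ℝ) : ℂ) ∈ Complex.slitPlane := Complex.ofReal_mem_slitPlane.mpr ht
    have h1 := ((Complex.hasStrictDerivAt_cpow_const (c := -(s - σ₀)) h0).hasDerivAt).comp_ofReal
    have h2 : -(s - (σ₀:ℂ)) * (t:ℂ) ^ (-(s - σ₀ + 1)) = -(s - (σ₀:ℂ)) * (t:ℂ) ^ (-(s - (σ₀:ℂ)) - 1) := by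
      rw [show -(s - (σ₀:ℂ) + 1) = -(s - (σ₀:ℂ)) - 1 from by ring]
    rw [h2]
    exact h1
  -- Abel summation for each N
  have hA : ∀ N : ℕ, (∑ n ∈ Finset.Icc 1 N, a n * (n : ℂ) ^ (-s)) =
      f N * S N + (s - σ₀) * ∫ t in Set.Ioc (1:ℝ) N, S t * (t : ℂ) ^ (-(s - σ₀ + 1)) := by
    intro N
    have hdiff : ∀ t ∈ Set.Icc (1:ℝ) (N:ℝ), DifferentiableAt ℝ f t :=
      fun t ht => (hder t (lt_of_lt_of_le one_pos ht.1)).differentiableAt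
    have hderiv_eq : Set.EqOn (deriv f)
        (fun t : ℝ => -(s - σ₀) * (t : ℂ) ^ (-(s - σ₀ + 1))) (Set.Icc (1:ℝ) (N:ℝ)) :=
      fun t ht => (hder t (lt_of_lt_of_le one_pos ht.1)).deriv
    have hcont : ContinuousOn (fun t : ℝ => -(s - σ₀) * (t : ℂ) ^ (-(s - σ₀ + 1)))
        (Set.Icc (1:ℝ) (N:ℝ)) :=
      continuousOn_const.mul (fun t ht => (Complex.continuousAt_ofReal_cpow_const t _
        (Or.inr (ne_of_gt (lt_of_lt_of_le one_pos ht.1)))).continuousWithinAt)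
    have hfint : IntegrableOn (deriv f) (Set.Icc (1:ℝ) (N:ℝ)) :=
      (hcont.integrableOn_Icc).congr_fun hderiv_eq.symm measurableSet_Icc
    have habel := sum_mul_eq_sub_integral_mul₀ c hc0 (N : ℝ) hdiff hfint
    have hL : ∑ k ∈ Finset.Icc 0 ⌊(N:ℝ)⌋₊, f k * c k =
        ∑ n ∈ Finset.Icc 1 N, a n * (n : ℂ) ^ (-s) := by
      simp only [Nat.floor_natCast]
      rw [Finset.Icc_eq_cons_Ioc (Nat.zero_le N), Finset.sum_cons, hc0, mul_zero, zero_add,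
        show Finset.Icc 1 N = Finset.Ioc 0 N from (Finset.Icc_add_one_left_eq_Ioc 0 N)]
      refine Finset.sum_congr rfl fun k hk => ?_
      have hk0 : k ≠ 0 := (Finset.mem_Ioc.mp hk).1.ne'
      have hk0' : ((k : ℕ) : ℂ) ≠ 0 := Nat.cast_ne_zero.mpr hk0
      have hpow : ((k:ℂ)) ^ (-(s - (σ₀:ℂ))) * (k:ℂ) ^ (-(σ₀:ℂ)) = (k:ℂ) ^ (-s) := by
        rw [← Complex.cpow_add _ _ hk0']
        congr 1
        ring
      simp only [hcdef, hfdef, if_neg hk0]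
      push_cast
      rw [← hpow]
      ring
    have hIeq : ∫ t in Set.Ioc (1:ℝ) (N:ℝ), deriv f t * ∑ k ∈ Finset.Icc 0 ⌊t⌋₊, c k =
        -(s - σ₀) * ∫ t in Set.Ioc (1:ℝ) (N:ℝ), S t * (t : ℂ) ^ (-(s - σ₀ + 1)) := by
      rw [← integral_const_mul]
      refine setIntegral_congr_fun measurableSet_Ioc fun t ht => ?_
      have ht0 : (0:ℝ) < t := lt_trans one_pos ht.1
      rw [hsum ⌊t⌋₊, ← hSfloor t, (hder t ht0).deriv]
      ring
    rw [hL, hsum ⌊(N:ℝ)⌋₊, Nat.floor_natCast] at habel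
    rw [habel, hIeq]
    ring
  -- limits
  have hT1 : Tendsto (fun N : ℕ => f N * S N) atTop (nhds 0) := by
    refine squeeze_zero_norm' (a := fun N : ℕ => C * (N : ℝ) ^ (-(s.re - σ₀))) ?_ ?_
    · filter_upwards [eventually_ge_atTop 1] with N hN
      have hN0 : (0:ℝ) < (N:ℝ) := by exact_mod_cast Nat.pos_of_ne_zero (by omega)
      show ‖f N * S N‖ ≤ C * (N : ℝ) ^ (-(s.re - σ₀))
      rw [norm_mul, hfdef]
      simp only
      rw [Complex.norm_cpow_eq_rpow_re_of_pos hN0,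
        show ((-(s - (σ₀:ℂ))).re) = -(s.re - σ₀) from by simp, mul_comm C]
      exact mul_le_mul_of_nonneg_left (hCb _) (Real.rpow_nonneg hN0.le _)
    · have h := (tendsto_rpow_neg_atTop (show (0:ℝ) < s.re - σ₀ by linarith)).comp
        (tendsto_natCast_atTop_atTop (R := ℝ))
      have h2 := h.const_mul C
      simpa using h2
  have hUnion : (⋃ N : ℕ, Set.Ioc (1:ℝ) (N:ℝ)) = Set.Ioi 1 := by
    ext x
    simp only [Set.mem_iUnion, Set.mem_Ioc, Set.mem_Ioi]
    constructor
    · rintro ⟨N, h1, _⟩; exact h1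
    · intro hx
      obtain ⟨N, hN⟩ := exists_nat_ge x
      exact ⟨N, hx, hN⟩
  have hT2 : Tendsto (fun N : ℕ => ∫ t in Set.Ioc (1:ℝ) (N:ℝ), S t * (t : ℂ) ^ (-(s - σ₀ + 1)))
      atTop (nhds (∫ u in Set.Ici (1:ℝ), S u * (u : ℂ) ^ (-(s - σ₀ + 1)))) := by
    rw [integral_Ici_eq_integral_Ioi, ← hUnion]
    exact tendsto_setIntegral_of_monotone (fun N => measurableSet_Ioc)
      (fun m n h => Set.Ioc_subset_Ioc_right (by exact_mod_cast h))
      (by rw [hUnion]; exact hInt.mono_set Set.Ioi_subset_Ici_self)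
  have := hT1.add (hT2.const_mul (s - σ₀))
  rw [zero_add] at this
  exact this.congr (fun N => (hA N).symm)
end
end
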